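/- Let Q_igc(U) = tr(Uᵀ ¬D̃^{-1/2}(¬D̃ − ¬Ã)¬D̃^{-1/2} U). Then the gradient descent step U' = U − (1/2)·∇Q_igc(U) equals U' = (¬D̃^{-1/2} ¬Ã ¬D̃^{-1/2}) U; i.e., the IGC update is gradient descent on Q_igc with step size 1/2. -/
import Mathlib


open Matrix BigOperators

theorem stmt13 (n d : ℕ) (A : Matrix (Fin n) (Fin n) ℝ)
    (hsym : A.IsSymm) (h01 : ∀ i j, A i j = 0 ∨ A i j = 1) (hdiag : ∀ i, A i i = 0)
    (deg : Fin n → ℝ) (hdeg : ∀ i, deg i = ∑ j, A i j)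
    (At Dt Dh : Matrix (Fin n) (Fin n) ℝ)
    (hAt : At = (2 : ℝ) • (1 : Matrix (Fin n) (Fin n) ℝ) - A)
    (hDt : Dt = (2 : ℝ) • (1 : Matrix (Fin n) (Fin n) ℝ) + Matrix.diagonal deg)
    (hDh : Dh = Matrix.diagonal (fun i => 1 / Real.sqrt (deg i + 2)))
    (U : Matrix (Fin n) (Fin d) ℝ) :
    U - (1 / 2 : ℝ) • ((2 : ℝ) • (Dh * (Dt - At) * Dh * U)) = Dh * At * Dh * U := by
  have hpos : ∀ i, 0 < deg i + 2 := by
    intro i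
    have h0 : 0 ≤ deg i := by
      rw [hdeg]
      exact Finset.sum_nonneg fun j _ => by rcases h01 i j with h | h <;> simp [h]
    linarith
  have hDtdiag : Dt = Matrix.diagonal (fun i => deg i + 2) := by
    rw [hDt]
    ext i j
    by_cases h : i = j <;> simp [Matrix.diagonal, Matrix.one_apply, h, add_comm]
  have key : Dh * Dt * Dh = 1 := by
    rw [hDh, hDtdiag, Matrix.diagonal_mul_diagonal, Matrix.diagonal_mul_diagonal]
    rw [show (1 : Matrix (Fin n) (Fin n) ℝ) = Matrix.diagonal (fun _ => 1) from
      (Matrix.diagonal_one).symm]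
    apply congrArg Matrix.diagonal
    funext i
    have hs : Real.sqrt (deg i + 2) * Real.sqrt (deg i + 2) = deg i + 2 :=
      Real.mul_self_sqrt (hpos i).le
    have hne : deg i + 2 ≠ 0 := ne_of_gt (hpos i)
    calc 1 / Real.sqrt (deg i + 2) * (deg i + 2) * (1 / Real.sqrt (deg i + 2))
        = (deg i + 2) / (Real.sqrt (deg i + 2) * Real.sqrt (deg i + 2)) := by ring
      _ = 1 := by rw [hs, div_self hne]
  have : Dh * (Dt - At) * Dh * U = U - Dh * At * Dh * U := by
    have : Dh * (Dt - At) * Dh = 1 - Dh * At * Dh := by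
      rw [Matrix.mul_sub, Matrix.sub_mul, key]
    rw [this, Matrix.sub_mul, Matrix.one_mul]
  rw [this]
  have h2 : (1 / 2 : ℝ) • ((2 : ℝ) • (U - Dh * At * Dh * U)) = U - Dh * At * Dh * U := by
    rw [smul_smul]; norm_num
  rw [h2]
  abel
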